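/- arXiv:1506.04163 — 5 statements merged into one kernel-verified Lean document; each statement's English description precedes it below -/
import Mathlib

section
/- Let X be a Hilbert space, A : X → X a bounded skew-adjoint operator, B : X → X a bounded self-adjoint nonnegative operator, and T > 0. Let z : [0,T] → X solve z' + Az + Bz = 0 and φ : [0,T] → X solve φ' + Aφ = 0 with φ(0) = z(0). Then ∫₀ᵀ ‖B^{1/2} φ(t)‖² dt ≤ (8T²‖B^{1/2}‖⁴ + 2) ∫₀ᵀ ‖B^{1/2} z(t)‖² dt. -/
open RealInnerProductSpace

theorem stmt1 {X : Type*} [NormedAddCommGroup X] [InnerProductSpace ℝ X] [CompleteSpace X]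
    (A B sqrtB : X →L[ℝ] X) (T : ℝ) (hT : 0 < T)
    (hA : ∀ x : X, ⟪A x, x⟫ = 0)
    (hBsa : ∀ x y : X, ⟪B x, y⟫ = ⟪x, B y⟫)
    (hBnn : ∀ x : X, 0 ≤ ⟪B x, x⟫)
    (hsqrtB : ∀ x : X, ‖sqrtB x‖ ^ 2 = ⟪B x, x⟫)
    (z φ : ℝ → X)
    (hz : ∀ t ∈ Set.Icc (0:ℝ) T, HasDerivAt z (-(A (z t)) - B (z t)) t)
    (hφ : ∀ t ∈ Set.Icc (0:ℝ) T, HasDerivAt φ (-(A (φ t))) t)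
    (h0 : φ 0 = z 0) :
    (∫ t in (0:ℝ)..T, ‖sqrtB (φ t)‖ ^ 2) ≤
      (8 * T ^ 2 * ‖sqrtB‖ ^ 4 + 2) * ∫ t in (0:ℝ)..T, ‖sqrtB (z t)‖ ^ 2 := by
  set M := ‖sqrtB‖ with hMdef
  have hM0 : 0 ≤ M := norm_nonneg _
  set θ : ℝ → X := fun t => φ t - z t with hθdef
  -- polarization: ⟪B x, y⟫ = ⟪sqrtB x, sqrtB y⟫
  have hBpol : ∀ x y : X, ⟪B x, y⟫ = ⟪sqrtB x, sqrtB y⟫ := by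
    intro x y
    have h1 := hsqrtB (x + y)
    have h2 := hsqrtB x
    have h3 := hsqrtB y
    have e1 : ‖sqrtB (x + y)‖ ^ 2
        = ‖sqrtB x‖ ^ 2 + 2 * ⟪sqrtB x, sqrtB y⟫ + ‖sqrtB y‖ ^ 2 := by
      rw [map_add, ← real_inner_self_eq_norm_sq, ← real_inner_self_eq_norm_sq,
        ← real_inner_self_eq_norm_sq, real_inner_add_add_self]
    have e2 : ⟪B (x + y), x + y⟫ = ⟪B x, x⟫ + 2 * ⟪B x, y⟫ + ⟪B y, y⟫ := by
      have hyx : ⟪B y, x⟫ = ⟪B x, y⟫ := by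
        rw [hBsa y x, real_inner_comm]
      simp only [map_add, inner_add_left, inner_add_right]
      rw [hyx]; ring
    rw [e2] at h1
    rw [e1] at h1
    linarith
  -- continuity
  have hzc : ContinuousOn z (Set.Icc 0 T) :=
    fun t ht => (hz t ht).continuousAt.continuousWithinAt
  have hφc : ContinuousOn φ (Set.Icc 0 T) :=
    fun t ht => (hφ t ht).continuousAt.continuousWithinAt
  have hθc : ContinuousOn θ (Set.Icc 0 T) := hφc.sub hzc
  have hsz : ContinuousOn (fun t => sqrtB (z t)) (Set.Icc 0 T) :=
    sqrtB.continuous.comp_continuousOn hzc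
  have hsθ : ContinuousOn (fun t => sqrtB (θ t)) (Set.Icc 0 T) :=
    sqrtB.continuous.comp_continuousOn hθc
  have hsφ : ContinuousOn (fun t => sqrtB (φ t)) (Set.Icc 0 T) :=
    sqrtB.continuous.comp_continuousOn hφc
  set g : ℝ → ℝ := fun s => ⟪sqrtB (z s), sqrtB (θ s)⟫ with hgdef
  have hgc : ContinuousOn g (Set.Icc 0 T) := hsz.inner hsθ
  -- θ derivative
  have hθd : ∀ t ∈ Set.Icc (0:ℝ) T, HasDerivAt θ (-(A (θ t)) + B (z t)) t := by
    intro t ht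
    have := (hφ t ht).sub (hz t ht)
    refine this.congr_deriv ?_
    rw [show θ t = φ t - z t from rfl, map_sub]
    abel
  -- derivative of ‖θ‖²
  have hfd : ∀ t ∈ Set.Icc (0:ℝ) T,
      HasDerivAt (fun t => ⟪θ t, θ t⟫) (2 * g t) t := by
    intro t ht
    have h := (hθd t ht).inner ℝ (hθd t ht)
    refine h.congr_deriv ?_
    have hAθ : ⟪A (θ t), θ t⟫ = 0 := hA _
    have hBθ : ⟪B (z t), θ t⟫ = g t := hBpol _ _
    have hc : ⟪θ t, -(A (θ t)) + B (z t)⟫ = ⟪-(A (θ t)) + B (z t), θ t⟫ :=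
      real_inner_comm _ _
    rw [hc]
    simp only [inner_add_left, inner_neg_left, hAθ, hBθ]
    ring
  -- FTC
  have key : ∀ t ∈ Set.Icc (0:ℝ) T, ‖θ t‖ ^ 2 = ∫ s in (0:ℝ)..t, 2 * g s := by
    intro t ht
    have hsub : Set.uIcc (0:ℝ) t ⊆ Set.Icc 0 T := by
      rw [Set.uIcc_of_le ht.1]
      exact Set.Icc_subset_Icc le_rfl ht.2
    have hint : IntervalIntegrable (fun s => 2 * g s) MeasureTheory.volume 0 t :=
      (((hgc.mono hsub).const_smul (2:ℝ)).mono (by rw [Set.uIcc_of_le ht.1])).intervalIntegrable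
    have := intervalIntegral.integral_eq_sub_of_hasDerivAt
      (fun s hs => hfd s (hsub hs)) hint
    have hθ0 : θ 0 = 0 := by simp [hθdef, h0]
    rw [this, hθ0]
    rw [← real_inner_self_eq_norm_sq]; simp
  -- integrability facts on [0,T]
  have hII : ∀ {f : ℝ → ℝ}, ContinuousOn f (Set.Icc 0 T) →
      IntervalIntegrable f MeasureTheory.volume 0 T := by
    intro f hf
    exact (hf.mono (by rw [Set.uIcc_of_le hT.le])).intervalIntegrable
  set S : ℝ := ∫ t in (0:ℝ)..T, ‖sqrtB (z t)‖ ^ 2 with hSdef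
  set Q : ℝ := ∫ t in (0:ℝ)..T, ‖sqrtB (θ t)‖ ^ 2 with hQdef
  set G : ℝ := ∫ t in (0:ℝ)..T, |g t| with hGdef
  have hSzc : ContinuousOn (fun t => ‖sqrtB (z t)‖ ^ 2) (Set.Icc 0 T) := (hsz.norm).pow 2
  have hSθc : ContinuousOn (fun t => ‖sqrtB (θ t)‖ ^ 2) (Set.Icc 0 T) := (hsθ.norm).pow 2
  have hSφc : ContinuousOn (fun t => ‖sqrtB (φ t)‖ ^ 2) (Set.Icc 0 T) := (hsφ.norm).pow 2
  have hgabs : ContinuousOn (fun t => |g t|) (Set.Icc 0 T) := hgc.abs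
  have hSi := hII hSzc
  have hQi := hII hSθc
  have hGi := hII hgabs
  have hφi := hII hSφc
  have hG0 : 0 ≤ G := intervalIntegral.integral_nonneg hT.le (fun u _ => abs_nonneg _)
  have hS0 : 0 ≤ S := intervalIntegral.integral_nonneg hT.le (fun u _ => sq_nonneg _)
  have hQ0 : 0 ≤ Q := intervalIntegral.integral_nonneg hT.le (fun u _ => sq_nonneg _)
  -- pointwise bound : ‖θ t‖² ≤ 2 G
  have hθbound : ∀ t ∈ Set.Icc (0:ℝ) T, ‖θ t‖ ^ 2 ≤ 2 * G := by
    intro t ht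
    rw [key t ht]
    have hsub : Set.uIcc (0:ℝ) t ⊆ Set.Icc 0 T := by
      rw [Set.uIcc_of_le ht.1]
      exact Set.Icc_subset_Icc le_rfl ht.2
    have hint1 : IntervalIntegrable g MeasureTheory.volume 0 t :=
      ((hgc.mono hsub).mono (by rw [Set.uIcc_of_le ht.1])).intervalIntegrable
    have hint2 : IntervalIntegrable (fun s => |g s|) MeasureTheory.volume 0 t :=
      ((hgabs.mono hsub).mono (by rw [Set.uIcc_of_le ht.1])).intervalIntegrable
    have h1 : (∫ s in (0:ℝ)..t, 2 * g s) = 2 * ∫ s in (0:ℝ)..t, g s := by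
      simp [intervalIntegral.integral_const_mul]
    rw [h1]
    have h2 : (∫ s in (0:ℝ)..t, g s) ≤ ∫ s in (0:ℝ)..t, |g s| :=
      intervalIntegral.integral_mono_on ht.1 hint1 hint2 (fun s _ => le_abs_self _)
    have h3 : (∫ s in (0:ℝ)..t, |g s|) ≤ G :=
      intervalIntegral.integral_mono_interval le_rfl ht.1 ht.2
        (MeasureTheory.ae_of_all _ (fun s => abs_nonneg _)) hGi
    linarith
  -- Q ≤ 2 T M² G
  have hQle : Q ≤ 2 * T * M ^ 2 * G := by
    have h1 : Q ≤ ∫ t in (0:ℝ)..T, 2 * M ^ 2 * G := by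
      apply intervalIntegral.integral_mono_on hT.le hQi (by simp) 
      intro t ht
      have hb : ‖sqrtB (θ t)‖ ≤ M * ‖θ t‖ := sqrtB.le_opNorm _
      have h2 := hθbound t ht
      nlinarith [norm_nonneg (sqrtB (θ t)), norm_nonneg (θ t), sq_nonneg M]
    rw [intervalIntegral.integral_const, sub_zero, smul_eq_mul] at h1
    linarith
  -- Young : 2 T M² |g s| ≤ 2 T² M⁴ ‖sqrtB z s‖² + ½ ‖sqrtB θ s‖²
  have hYoung : 2 * T * M ^ 2 * G ≤ 2 * T ^ 2 * M ^ 4 * S + Q / 2 := by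
    have h1 : (∫ t in (0:ℝ)..T, 2 * T * M ^ 2 * |g t|)
        ≤ ∫ t in (0:ℝ)..T,
            (2 * T ^ 2 * M ^ 4 * ‖sqrtB (z t)‖ ^ 2 + ‖sqrtB (θ t)‖ ^ 2 / 2) := by
      apply intervalIntegral.integral_mono_on hT.le (hGi.const_mul _)
        ((hSi.const_mul _).add (hQi.div_const _))
      intro t ht
      have hab : |g t| ≤ ‖sqrtB (z t)‖ * ‖sqrtB (θ t)‖ := abs_real_inner_le_norm _ _
      have hTM : 0 ≤ 2 * T * M ^ 2 := by positivity
      have h2 : 2 * T * M ^ 2 * |g t| ≤ 2 * T * M ^ 2 * (‖sqrtB (z t)‖ * ‖sqrtB (θ t)‖) :=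
        mul_le_mul_of_nonneg_left hab hTM
      nlinarith [sq_nonneg (T * M ^ 2 * ‖sqrtB (z t)‖ - ‖sqrtB (θ t)‖ / 2)]
    rw [intervalIntegral.integral_const_mul] at h1
    rw [intervalIntegral.integral_add (hSi.const_mul _) (hQi.div_const _)] at h1
    rw [intervalIntegral.integral_const_mul, intervalIntegral.integral_div] at h1
    linarith
  have hQfinal : Q ≤ 4 * T ^ 2 * M ^ 4 * S := by linarith
  -- final : ∫‖sqrtB φ‖² ≤ 2S + 2Q
  have hfinal : (∫ t in (0:ℝ)..T, ‖sqrtB (φ t)‖ ^ 2) ≤ 2 * S + 2 * Q := by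
    have h1 : (∫ t in (0:ℝ)..T, ‖sqrtB (φ t)‖ ^ 2)
        ≤ ∫ t in (0:ℝ)..T, (2 * ‖sqrtB (z t)‖ ^ 2 + 2 * ‖sqrtB (θ t)‖ ^ 2) := by
      apply intervalIntegral.integral_mono_on hT.le hφi
        ((hSi.const_mul _).add (hQi.const_mul _))
      intro t _
      have hφt : φ t = z t + θ t := by simp [hθdef]
      have : ‖sqrtB (φ t)‖ ≤ ‖sqrtB (z t)‖ + ‖sqrtB (θ t)‖ := by
        rw [hφt, map_add]; exact norm_add_le _ _
      have h2 : ‖sqrtB (φ t)‖ ^ 2 ≤ (‖sqrtB (z t)‖ + ‖sqrtB (θ t)‖) ^ 2 :=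
        pow_le_pow_left₀ (norm_nonneg _) this 2
      nlinarith [sq_nonneg (‖sqrtB (z t)‖ - ‖sqrtB (θ t)‖)]
    rw [intervalIntegral.integral_add (hSi.const_mul _) (hQi.const_mul _),
      intervalIntegral.integral_const_mul, intervalIntegral.integral_const_mul] at h1
    exact h1
  calc (∫ t in (0:ℝ)..T, ‖sqrtB (φ t)‖ ^ 2) ≤ 2 * S + 2 * Q := hfinal
    _ ≤ 2 * S + 2 * (4 * T ^ 2 * M ^ 4 * S) := by linarith
    _ = (8 * T ^ 2 * M ^ 4 + 2) * S := by ring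
end

section
/- Let X be a finite-dimensional Hilbert space, A : X → X skew-adjoint, B : X → X self-adjoint nonnegative, F : X → X a map, V : X → X a positive self-adjoint operator, and Δt > 0. Suppose (u^k), (ũ^k) in X satisfy the implicit midpoint scheme with viscosity: (ũ^{k+1} − u^k)/Δt + A((u^k + ũ^{k+1})/2) + B F((u^k + ũ^{k+1})/2) = 0 and (ũ^{k+1} − u^{k+1})/Δt = V u^{k+1}. Define E_k = (1/2)‖u^k‖². Then for every k, E_{k+1} − E_k = −Δt ⟨B m_k, F(m_k)⟩ − Δt ‖V^{1/2} u^{k+1}‖² − (Δt²/2) ‖V u^{k+1}‖², where m_k = (u^k + ũ^{k+1})/2. -/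
open RealInnerProductSpace

theorem stmt11 {X : Type*} [NormedAddCommGroup X] [InnerProductSpace ℝ X]
    [FiniteDimensional ℝ X]
    (A B V sqrtV : X →L[ℝ] X) (F : X → X) (Δt : ℝ) (hΔt : 0 < Δt)
    (hA : ∀ x : X, ⟪A x, x⟫ = 0)
    (hBsa : ∀ x y : X, ⟪B x, y⟫ = ⟪x, B y⟫)
    (hBnn : ∀ x : X, 0 ≤ ⟪B x, x⟫)
    (hVsa : ∀ x y : X, ⟪V x, y⟫ = ⟪x, V y⟫)
    (hVpos : ∀ x : X, x ≠ 0 → 0 < ⟪V x, x⟫)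
    (hsqrtV : ∀ x : X, ‖sqrtV x‖ ^ 2 = ⟪V x, x⟫)
    (u ut : ℕ → X)
    (hscheme1 : ∀ k : ℕ, (Δt)⁻¹ • (ut (k + 1) - u k)
        + A ((1/2 : ℝ) • (u k + ut (k + 1)))
        + B (F ((1/2 : ℝ) • (u k + ut (k + 1)))) = 0)
    (hscheme2 : ∀ k : ℕ, (Δt)⁻¹ • (ut (k + 1) - u (k + 1)) = V (u (k + 1))) :
    ∀ k : ℕ, (1/2 : ℝ) * ‖u (k + 1)‖ ^ 2 - (1/2 : ℝ) * ‖u k‖ ^ 2 =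
      -Δt * ⟪B ((1/2 : ℝ) • (u k + ut (k + 1))), F ((1/2 : ℝ) • (u k + ut (k + 1)))⟫
        - Δt * ‖sqrtV (u (k + 1))‖ ^ 2 - (Δt ^ 2 / 2) * ‖V (u (k + 1))‖ ^ 2 := by
  intro k
  set m : X := (1/2 : ℝ) • (u k + ut (k + 1)) with hm
  have h1 := hscheme1 k
  have h2 := hscheme2 k
  have hne : Δt ≠ 0 := hΔt.ne'
  -- step 1: ut (k+1) - u k = Δt • (-(A m + B (F m)))
  have h1' : ut (k + 1) - u k = Δt • (-(A m + B (F m))) := by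
    rw [add_assoc] at h1
    have := eq_neg_of_add_eq_zero_left h1
    rw [← this, smul_smul, mul_inv_cancel₀ hne, one_smul]
  -- pair with m
  have key : ⟪ut (k + 1) - u k, m⟫ = -Δt * ⟪B m, F m⟫ := by
    rw [h1', real_inner_smul_left, inner_neg_left, inner_add_left, hA,
      hBsa (F m) m, real_inner_comm (F m) (B m)]
    ring
  have expand : ⟪ut (k + 1) - u k, m⟫
      = (1/2 : ℝ) * ‖ut (k + 1)‖ ^ 2 - (1/2 : ℝ) * ‖u k‖ ^ 2 := by
    rw [hm, real_inner_smul_right, inner_sub_left, inner_add_right, inner_add_right,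
      real_inner_self_eq_norm_sq, real_inner_self_eq_norm_sq,
      real_inner_comm (u k) (ut (k + 1))]
    ring
  have E : (1/2 : ℝ) * ‖ut (k + 1)‖ ^ 2 - (1/2 : ℝ) * ‖u k‖ ^ 2 = -Δt * ⟪B m, F m⟫ := by
    rw [← expand, key]
  -- step 2: ut (k+1) = u (k+1) + Δt • V (u (k+1))
  have hw2 : ut (k + 1) = u (k + 1) + Δt • V (u (k + 1)) := by
    have : ut (k + 1) - u (k + 1) = Δt • V (u (k + 1)) := by
      rw [← h2, smul_smul, mul_inv_cancel₀ hne, one_smul]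
    rw [← this]; abel
  have NE : ‖ut (k + 1)‖ ^ 2 = ‖u (k + 1)‖ ^ 2 + 2 * Δt * ⟪V (u (k + 1)), u (k + 1)⟫
      + Δt ^ 2 * ‖V (u (k + 1))‖ ^ 2 := by
    rw [hw2, ← real_inner_self_eq_norm_sq, inner_add_left, inner_add_right, inner_add_right,
      real_inner_smul_left, real_inner_smul_right, real_inner_smul_left,
      real_inner_smul_right, real_inner_self_eq_norm_sq, real_inner_self_eq_norm_sq,
      real_inner_comm (u (k + 1)) (V (u (k + 1)))]
    ring
  linear_combination E - (1/2 : ℝ) * NE + Δt * hsqrtV (u (k + 1))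
end

section
/- Under the midpoint scheme of the previous statement with the additional sign assumption ⟨v, B F(v)⟩ ≥ 0 for every v ∈ X, the discrete energy E_k = (1/2)‖u^k‖² is nonincreasing in k. -/
open RealInnerProductSpace

theorem stmt12 {X : Type*} [NormedAddCommGroup X] [InnerProductSpace ℝ X]
    [FiniteDimensional ℝ X]
    (A B V : X →L[ℝ] X) (F : X → X) (Δt : ℝ) (hΔt : 0 < Δt)
    (hA : ∀ x : X, ⟪A x, x⟫ = 0)
    (hBsa : ∀ x y : X, ⟪B x, y⟫ = ⟪x, B y⟫)
    (hBnn : ∀ x : X, 0 ≤ ⟪B x, x⟫)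
    (hVsa : ∀ x y : X, ⟪V x, y⟫ = ⟪x, V y⟫)
    (hVpos : ∀ x : X, x ≠ 0 → 0 < ⟪V x, x⟫)
    (hsign : ∀ v : X, 0 ≤ ⟪v, B (F v)⟫)
    (u ut : ℕ → X)
    (hscheme1 : ∀ k : ℕ, (Δt)⁻¹ • (ut (k + 1) - u k)
        + A ((1/2 : ℝ) • (u k + ut (k + 1)))
        + B (F ((1/2 : ℝ) • (u k + ut (k + 1)))) = 0)
    (hscheme2 : ∀ k : ℕ, (Δt)⁻¹ • (ut (k + 1) - u (k + 1)) = V (u (k + 1))) :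
    ∀ k : ℕ, (1/2 : ℝ) * ‖u (k + 1)‖ ^ 2 ≤ (1/2 : ℝ) * ‖u k‖ ^ 2 := by

  intro k
  set a := u k with ha
  set b := ut (k + 1) with hb
  set c := u (k + 1) with hc
  set m := (1/2 : ℝ) • (a + b) with hm
  -- Step 1: ‖b‖² ≤ ‖a‖²
  have h1 := hscheme1 k
  have hinner : ⟪(Δt)⁻¹ • (b - a) + A m + B (F m), m⟫ = 0 := by
    rw [h1]; exact inner_zero_left m
  have hBm : 0 ≤ ⟪B (F m), m⟫ := by
    rw [real_inner_comm]; exact hsign m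
  have key : ⟪b - a, m⟫ = (1/2 : ℝ) * (‖b‖ ^ 2 - ‖a‖ ^ 2) := by
    rw [hm, inner_smul_right, inner_sub_left, inner_add_right, inner_add_right,
      real_inner_self_eq_norm_sq, real_inner_self_eq_norm_sq, real_inner_comm a b]
    ring
  have hexp : ⟪(Δt)⁻¹ • (b - a) + A m + B (F m), m⟫
      = (Δt)⁻¹ * ((1/2 : ℝ) * (‖b‖ ^ 2 - ‖a‖ ^ 2)) + ⟪A m, m⟫ + ⟪B (F m), m⟫ := by
    rw [inner_add_left, inner_add_left, real_inner_smul_left, key]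
  have hstep1 : ‖b‖ ^ 2 ≤ ‖a‖ ^ 2 := by
    have h0 : (Δt)⁻¹ * ((1/2 : ℝ) * (‖b‖ ^ 2 - ‖a‖ ^ 2)) ≤ 0 := by
      have := hA m
      nlinarith [hinner, hexp]
    have hpos : 0 < (Δt)⁻¹ := inv_pos.mpr hΔt
    nlinarith
  -- Step 2: ‖c‖² ≤ ‖b‖²
  have hbc : b = c + Δt • V c := by
    have h2 := hscheme2 k
    have h3 : b - c = Δt • V c := by
      rw [← h2, smul_smul, mul_inv_cancel₀ hΔt.ne', one_smul]
    rw [← h3]; abel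
  have hVc : 0 ≤ ⟪V c, c⟫ := by
    rcases eq_or_ne c 0 with h | h
    · simp [h]
    · exact (hVpos c h).le
  have h4 : ‖c‖ ^ 2 ≤ ⟪b, c⟫ := by
    rw [hbc, inner_add_left, real_inner_smul_left, real_inner_self_eq_norm_sq]
    nlinarith [mul_nonneg hΔt.le hVc]
  have h5 : ⟪b, c⟫ ≤ ‖b‖ * ‖c‖ := real_inner_le_norm b c
  have hstep2 : ‖c‖ ^ 2 ≤ ‖b‖ ^ 2 := by
    nlinarith [norm_nonneg b, norm_nonneg c, sq_nonneg (‖b‖ - ‖c‖)]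
  nlinarith
end

section
/- Let X be a finite-dimensional Hilbert space, A skew-adjoint, B self-adjoint nonnegative bounded, V positive self-adjoint on X, Δt > 0, N ∈ ℕ. Let (φ^k, φ̃^k) solve the viscous conservative midpoint scheme (φ̃^{k+1} − φ^k)/Δt + A((φ^k + φ̃^{k+1})/2) = 0, (φ̃^{k+1} − φ^{k+1})/Δt = V φ^{k+1}, and let (z^k, z̃^k) solve the damped scheme (z̃^{k+1} − z^k)/Δt + A((z^k + z̃^{k+1})/2) + B((z^k + z̃^{k+1})/2) = 0, (z̃^{k+1} − z^{k+1})/Δt = V z^{k+1}, with φ^0 = z^0. Setting θ^k = φ^k − z^k, θ̃^k = φ̃^k − z̃^k, one has for every k ≤ N: (1/2)‖θ^k‖² + Δt Σ_{i=0}^{k−1} ‖V^{1/2} θ^{i+1}‖² + (Δt²/2) Σ_{i=0}^{k−1} ‖V θ^{i+1}‖² = Δt Σ_{i=0}^{k−1} ⟨B((z^i + z̃^{i+1})/2), (θ^i + θ̃^{i+1})/2⟩. -/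
open RealInnerProductSpace

theorem stmt13 {X : Type*} [NormedAddCommGroup X] [InnerProductSpace ℝ X]
    [FiniteDimensional ℝ X]
    (A B V sqrtV : X →L[ℝ] X) (Δt : ℝ) (hΔt : 0 < Δt) (N : ℕ)
    (hA : ∀ x : X, ⟪A x, x⟫ = 0)
    (hBsa : ∀ x y : X, ⟪B x, y⟫ = ⟪x, B y⟫)
    (hBnn : ∀ x : X, 0 ≤ ⟪B x, x⟫)
    (hVsa : ∀ x y : X, ⟪V x, y⟫ = ⟪x, V y⟫)
    (hVpos : ∀ x : X, x ≠ 0 → 0 < ⟪V x, x⟫)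
    (hsqrtV : ∀ x : X, ‖sqrtV x‖ ^ 2 = ⟪V x, x⟫)
    (φ φt z zt : ℕ → X)
    (hφ1 : ∀ k : ℕ, (Δt)⁻¹ • (φt (k + 1) - φ k)
        + A ((1/2 : ℝ) • (φ k + φt (k + 1))) = 0)
    (hφ2 : ∀ k : ℕ, (Δt)⁻¹ • (φt (k + 1) - φ (k + 1)) = V (φ (k + 1)))
    (hz1 : ∀ k : ℕ, (Δt)⁻¹ • (zt (k + 1) - z k)
        + A ((1/2 : ℝ) • (z k + zt (k + 1)))
        + B ((1/2 : ℝ) • (z k + zt (k + 1))) = 0)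
    (hz2 : ∀ k : ℕ, (Δt)⁻¹ • (zt (k + 1) - z (k + 1)) = V (z (k + 1)))
    (h0 : φ 0 = z 0) :
    ∀ k ≤ N, (1/2 : ℝ) * ‖φ k - z k‖ ^ 2
        + Δt * ∑ i ∈ Finset.range k, ‖sqrtV (φ (i + 1) - z (i + 1))‖ ^ 2
        + (Δt ^ 2 / 2) * ∑ i ∈ Finset.range k, ‖V (φ (i + 1) - z (i + 1))‖ ^ 2
      = Δt * ∑ i ∈ Finset.range k,
          ⟪B ((1/2 : ℝ) • (z i + zt (i + 1))),
            (1/2 : ℝ) • ((φ i - z i) + (φt (i + 1) - zt (i + 1)))⟫ := by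
  have hΔt' : Δt ≠ 0 := ne_of_gt hΔt
  set θ : ℕ → X := fun k => φ k - z k with hθdef
  set θt : ℕ → X := fun k => φt k - zt k with hθtdef
  -- subtracted scheme
  have hθ1 : ∀ i : ℕ, (Δt)⁻¹ • (θt (i + 1) - θ i)
      + A ((1/2 : ℝ) • (θ i + θt (i + 1)))
      = B ((1/2 : ℝ) • (z i + zt (i + 1))) := by
    intro i
    have h1 := hφ1 i
    have h2 := hz1 i
    have e1 : (1/2 : ℝ) • (θ i + θt (i + 1))
        = (1/2 : ℝ) • (φ i + φt (i + 1)) - (1/2 : ℝ) • (z i + zt (i + 1)) := by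
      simp only [hθdef, hθtdef]; module
    have e2 : (Δt)⁻¹ • (θt (i + 1) - θ i)
        = (Δt)⁻¹ • (φt (i + 1) - φ i) - (Δt)⁻¹ • (zt (i + 1) - z i) := by
      simp only [hθdef, hθtdef]; module
    rw [e1, e2, map_sub, sub_add_sub_comm, h1, zero_sub,
      eq_neg_of_add_eq_zero_left h2, neg_neg]
  have hθ2 : ∀ i : ℕ, θt (i + 1) = θ (i + 1) + Δt • V (θ (i + 1)) := by
    intro i
    have h1 := hφ2 i
    have h2 := hz2 i
    have h1' : φt (i + 1) - φ (i + 1) = Δt • V (φ (i + 1)) := by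
      rw [← h1, smul_smul, mul_inv_cancel₀ hΔt', one_smul]
    have h2' : zt (i + 1) - z (i + 1) = Δt • V (z (i + 1)) := by
      rw [← h2, smul_smul, mul_inv_cancel₀ hΔt', one_smul]
    have : θt (i + 1) - θ (i + 1) = Δt • V (θ (i + 1)) := by
      simp only [hθdef, hθtdef, map_sub, smul_sub]
      rw [← h1', ← h2']; abel
    linear_combination (norm := module) this
  -- per-step energy identity
  have key : ∀ i : ℕ,
      (1/2 : ℝ) * ‖θ (i + 1)‖ ^ 2 - (1/2 : ℝ) * ‖θ i‖ ^ 2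
        + Δt * ‖sqrtV (θ (i + 1))‖ ^ 2 + (Δt ^ 2 / 2) * ‖V (θ (i + 1))‖ ^ 2
      = Δt * ⟪B ((1/2 : ℝ) • (z i + zt (i + 1))),
          (1/2 : ℝ) • (θ i + θt (i + 1))⟫ := by
    intro i
    set m : X := (1/2 : ℝ) • (θ i + θt (i + 1)) with hm
    have pair := congrArg (fun x : X => ⟪x, m⟫) (hθ1 i)
    simp only [inner_add_left, hA m] at pair
    have expand : ⟪(Δt)⁻¹ • (θt (i + 1) - θ i), m⟫
        = (Δt)⁻¹ * ((1/2 : ℝ) * (‖θt (i + 1)‖ ^ 2 - ‖θ i‖ ^ 2)) := by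
      rw [hm, real_inner_smul_left, real_inner_smul_right]
      congr 1
      have : ⟪θt (i + 1) - θ i, θ i + θt (i + 1)⟫
          = ‖θt (i + 1)‖ ^ 2 - ‖θ i‖ ^ 2 := by
        rw [inner_sub_left, inner_add_right, inner_add_right,
          real_inner_self_eq_norm_sq, real_inner_self_eq_norm_sq,
          real_inner_comm (θt (i + 1)) (θ i)]
        ring
      rw [this]
    rw [expand, ← hm, hA m, add_zero] at pair
    have hnorm : ‖θt (i + 1)‖ ^ 2 = ‖θ (i + 1)‖ ^ 2
        + 2 * Δt * ‖sqrtV (θ (i + 1))‖ ^ 2 + Δt ^ 2 * ‖V (θ (i + 1))‖ ^ 2 := by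
      rw [hθ2 i, norm_add_sq_real, real_inner_smul_right, norm_smul,
        hsqrtV, real_inner_comm]
      simp [mul_pow, abs_of_pos hΔt]
      ring
    rw [inv_mul_eq_div, div_eq_iff hΔt'] at pair
    rw [hnorm] at pair
    rw [hm] at pair ⊢
    linarith [pair]
  intro k hk
  induction k with
  | zero => simp [h0]
  | succ n ih =>
    have ihn := ih (Nat.le_of_succ_le hk)
    simp only [Finset.sum_range_succ]
    have hkey := key n
    simp only [hθdef, hθtdef] at hkey ihn ⊢
    ring_nf
    ring_nf at hkey ihn
    linarith [hkey, ihn]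
end

section
/- Let M : [0, s₀²] → [0,∞) be continuous, increasing, with M(0) = 0 and M(x) > 0 for x > 0, and let ρ ∈ (0,1). Let (E_k)_{k∈ℕ} be a nonincreasing sequence in [0, s₀²] satisfying E_{k+1} − E_k + ρ M(E_k) ≤ 0 for all k. Then for every p ∈ ℕ and every ℓ ∈ {0, …, p}, M(E_p) ≤ (1/ρ) · K_r^{-1}(ρ(p − ℓ))/(ℓ + 1), where r = E_0 and K_r(τ) = ∫_τ^r dy/M(y) for 0 < τ ≤ r (K_r is decreasing, K_r(r) = 0, and K_r^{-1} denotes its inverse). -/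
theorem stmt19 (s₀ ρ : ℝ) (hs₀ : 0 < s₀) (hρ : ρ ∈ Set.Ioo (0:ℝ) 1)
    (M : ℝ → ℝ) (hMcont : ContinuousOn M (Set.Icc 0 (s₀ ^ 2)))
    (hMmono : StrictMonoOn M (Set.Icc 0 (s₀ ^ 2))) (hM0 : M 0 = 0)
    (hMpos : ∀ x ∈ Set.Ioc (0:ℝ) (s₀ ^ 2), 0 < M x)
    (E : ℕ → ℝ) (hEanti : Antitone E) (hErange : ∀ k, E k ∈ Set.Icc (0:ℝ) (s₀ ^ 2))
    (hstep : ∀ k, E (k + 1) - E k + ρ * M (E k) ≤ 0)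
    (Kinv : ℝ → ℝ)
    (hKinv : ∀ τ ∈ Set.Ioc (0:ℝ) (E 0), Kinv (∫ y in τ..(E 0), 1 / M y) = τ)
    (hKinv_anti : Antitone Kinv)
    (hdom : ∀ t ≥ (0:ℝ), ∃ τ ∈ Set.Ioc (0:ℝ) (E 0), (∫ y in τ..(E 0), 1 / M y) = t) :
    ∀ p ℓ : ℕ, ℓ ≤ p →
      M (E p) ≤ (1 / ρ) * Kinv (ρ * ((p : ℝ) - (ℓ : ℝ))) / ((ℓ : ℝ) + 1) := by
  obtain ⟨hρ0, hρ1⟩ := hρ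
  have hMmo := hMmono.monotoneOn
  have hE0 : ∀ k, 0 ≤ E k := fun k => (hErange k).1
  have hEle : ∀ k, E k ≤ s₀ ^ 2 := fun k => (hErange k).2
  -- continuity / integrability of 1/M on positive intervals
  have hcont : ∀ a b : ℝ, 0 < a → b ≤ s₀ ^ 2 →
      ContinuousOn (fun y => 1 / M y) (Set.Icc a b) := by
    intro a b ha hb
    apply ContinuousOn.div continuousOn_const (hMcont.mono ?_) ?_
    · intro x hx; exact ⟨le_trans ha.le hx.1, le_trans hx.2 hb⟩
    · intro x hx; exact (hMpos x ⟨lt_of_lt_of_le ha hx.1, le_trans hx.2 hb⟩).ne'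
  have hint : ∀ a b : ℝ, 0 < a → a ≤ b → b ≤ s₀ ^ 2 →
      IntervalIntegrable (fun y => 1 / M y) MeasureTheory.volume a b := by
    intro a b ha hab hb
    apply (hcont a b ha hb).intervalIntegrable_of_Icc hab
  -- key integral bound
  have hK : ∀ m : ℕ, 0 < E m → ρ * m ≤ ∫ y in E m..E 0, 1 / M y := by
    intro m
    induction m with
    | zero => intro _; simp
    | succ n ih =>
      intro hpos
      have hle : E (n + 1) ≤ E n := hEanti (Nat.le_succ n)
      have hEn : 0 < E n := lt_of_lt_of_le hpos hle
      have hEn0 : E n ≤ E 0 := hEanti (Nat.zero_le n)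
      have hMn : 0 < M (E n) := hMpos _ ⟨hEn, hEle n⟩
      have hint1 : IntervalIntegrable (fun y => 1 / M y) MeasureTheory.volume
          (E (n + 1)) (E n) := hint _ _ hpos hle (hEle n)
      have hint2 : IntervalIntegrable (fun y => 1 / M y) MeasureTheory.volume
          (E n) (E 0) := hint _ _ hEn hEn0 (hEle 0)
      have hmono : ∀ y ∈ Set.Icc (E (n + 1)) (E n), 1 / M (E n) ≤ 1 / M y := by
        intro y hy
        have hy0 : 0 < y := lt_of_lt_of_le hpos hy.1
        have hMy : 0 < M y := hMpos y ⟨hy0, le_trans hy.2 (hEle n)⟩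
        exact one_div_le_one_div_of_le hMy
          (hMmo ⟨hy0.le, le_trans hy.2 (hEle n)⟩ (hErange n) hy.2)
      have hlower := intervalIntegral.integral_mono_on hle
        (intervalIntegrable_const (c := 1 / M (E n))) hint1 hmono
      rw [intervalIntegral.integral_const] at hlower
      have hsm : ρ ≤ (E n - E (n + 1)) * (1 / M (E n)) := by
        rw [mul_one_div, le_div_iff₀ hMn]
        nlinarith [hstep n]
      have hadd : (∫ y in E (n + 1)..E n, 1 / M y) + ∫ y in E n..E 0, 1 / M y
          = ∫ y in E (n + 1)..E 0, 1 / M y :=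
        intervalIntegral.integral_add_adjacent_intervals hint1 hint2
      have hcast : ρ * ((n + 1 : ℕ) : ℝ) = ρ * n + ρ := by push_cast; ring
      have hih := ih hEn
      rw [smul_eq_mul] at hlower
      linarith
  -- E m ≤ Kinv (ρ m)
  have hA : ∀ m : ℕ, E m ≤ Kinv (ρ * m) := by
    intro m
    rcases lt_or_eq_of_le (hE0 m) with hpos | heq
    · have hmem : E m ∈ Set.Ioc (0:ℝ) (E 0) := ⟨hpos, hEanti (Nat.zero_le m)⟩
      have h1 := hKinv _ hmem
      calc E m = Kinv (∫ y in E m..E 0, 1 / M y) := h1.symm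
        _ ≤ Kinv (ρ * m) := hKinv_anti (hK m hpos)
    · obtain ⟨τ, hτ, hτK⟩ := hdom (ρ * m) (by positivity)
      have h2 := hKinv τ hτ
      rw [hτK] at h2
      linarith [hτ.1]
  -- summed energy inequality
  have hB : ∀ p ℓ : ℕ, ℓ ≤ p → E (p + 1) + ρ * ((ℓ : ℝ) + 1) * M (E p) ≤ E (p - ℓ) := by
    intro p ℓ
    induction ℓ with
    | zero => intro _; simp; linarith [hstep p]
    | succ n ih =>
      intro hnp
      have hn : n ≤ p := le_trans (Nat.le_succ n) hnp
      have h1 := ih hn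
      have hidx : p - n = (p - (n + 1)) + 1 := by omega
      have h2 := hstep (p - (n + 1))
      rw [← hidx] at h2
      have hMle : M (E p) ≤ M (E (p - (n + 1))) :=
        hMmo (hErange p) (hErange _) (hEanti (Nat.sub_le p (n + 1)))
      have h3 : ρ * M (E p) ≤ ρ * M (E (p - (n + 1))) :=
        mul_le_mul_of_nonneg_left hMle hρ0.le
      push_cast
      push_cast at h1
      linarith
  intro p ℓ hlp
  have h1 := hB p ℓ hlp
  have h2 := hA (p - ℓ)
  have hcast : ((p - ℓ : ℕ) : ℝ) = (p : ℝ) - (ℓ : ℝ) := by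
    rw [Nat.cast_sub hlp]
  rw [hcast] at h2
  have hden : 0 < ρ * ((ℓ : ℝ) + 1) := by positivity
  have key : ρ * ((ℓ : ℝ) + 1) * M (E p) ≤ Kinv (ρ * ((p : ℝ) - (ℓ : ℝ))) := by
    linarith [hE0 (p + 1)]
  have hmain : M (E p) ≤ Kinv (ρ * ((p : ℝ) - (ℓ : ℝ))) / (ρ * ((ℓ : ℝ) + 1)) := by
    rw [le_div_iff₀ hden, mul_comm]
    exact key
  have heq : Kinv (ρ * ((p : ℝ) - (ℓ : ℝ))) / (ρ * ((ℓ : ℝ) + 1))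
      = (1 / ρ) * Kinv (ρ * ((p : ℝ) - (ℓ : ℝ))) / ((ℓ : ℝ) + 1) := by
    field_simp
  linarith [heq ▸ hmain]
end
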